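/- arXiv:2204.05298 — 5 statements merged into one kernel-verified Lean document; each statement's English description precedes it below -/
import Mathlib

section
/- Let f_{t,n}(θ) := θ·t^{θ−1}·n^{−θ}. Then for r ∈ {1,2} and θ with 2θ/r > 1, the scaled integral n^r ∫_1^n t^{1−r} [d^m f_{t,n}(θ)/dθ^m]^2 dt converges, as n → ∞, to r^{−2m+1}(2θ/r − 1)^{−2m−1} m (m + (2/r)(θ/r − 1)θ) Γ(2m − 1), for every integer m ≥ 1, where d^m f_{t,n}(θ)/dθ^m = f_{t,n}(θ)·ln^{m−1}(t/n)·(ln(t/n) + m/θ). -/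
open Filter Real MeasureTheory Set intervalIntegral

private lemma aux_subst (θ r : ℝ) (k : ℕ) (n : ℝ) (hn : 1 ≤ n) :
    n ^ r * ∫ t in (1:ℝ)..n, t ^ (1 - r) *
        (θ * t ^ (θ - 1) * n ^ (-θ) * Real.log (t / n) ^ k
          * (Real.log (t / n) + ((k:ℝ)+1) / θ)) ^ 2
      = ∫ u in (0:ℝ)..Real.log n, exp (-((2*θ-r)*u)) * (θ^2 * u^(2*k) * (u - ((k:ℝ)+1)/θ)^2) := by
  have hn0 : (0:ℝ) < n := lt_of_lt_of_le one_pos hn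
  set L := Real.log n with hL
  set H : ℝ → ℝ := fun t => t ^ (1 - r) *
        (θ * t ^ (θ - 1) * n ^ (-θ) * Real.log (t / n) ^ k
          * (Real.log (t / n) + ((k:ℝ)+1) / θ)) ^ 2 with hH
  have hne : ∀ x : ℝ, x ∈ Ioi (0:ℝ) → x ≠ 0 := fun x hx => ne_of_gt hx
  have hrp : ∀ c : ℝ, ContinuousOn (fun t : ℝ => t ^ c) (Ioi 0) := fun c =>
    fun x hx => (Real.continuousAt_rpow_const x c (Or.inl (hne x hx))).continuousWithinAt
  have hlog : ContinuousOn (fun t : ℝ => Real.log (t / n)) (Ioi 0) := by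
    apply ContinuousOn.log (continuousOn_id.div_const n)
    intro x hx; exact div_ne_zero (hne x hx) hn0.ne'
  have hHc : ContinuousOn H (Ioi 0) := by
    apply (hrp (1-r)).mul
    apply ContinuousOn.pow
    exact (((continuousOn_const.mul (hrp (θ-1))).mul continuousOn_const).mul (hlog.pow k)).mul
      (hlog.add continuousOn_const)
  have himg : Real.exp '' uIcc 0 L ⊆ Ioi 0 := by
    rintro x ⟨s, -, rfl⟩; exact exp_pos s
  have hsub := integral_comp_mul_deriv' (a := 0) (b := L) (f := Real.exp) (f' := Real.exp)
    (g := H) (fun x _ => Real.hasDerivAt_exp x) continuous_exp.continuousOn (hHc.mono himg)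
  rw [Real.exp_zero, Real.exp_log hn0] at hsub
  have hrefl : ∫ x in (0:ℝ)..L, (fun x => (H ∘ Real.exp) x * Real.exp x) (L - x)
      = ∫ x in (0:ℝ)..L, (H ∘ Real.exp) x * Real.exp x := by
    rw [integral_comp_sub_left (fun x => (H ∘ Real.exp) x * Real.exp x) L, sub_self, sub_zero]
  have key : ∀ u : ℝ, n ^ r * ((H ∘ Real.exp) (L - u) * Real.exp (L - u))
      = exp (-((2*θ-r)*u)) * (θ^2 * u^(2*k) * (u - ((k:ℝ)+1)/θ)^2) := by
    intro u
    have hlg : Real.log (Real.exp (L-u) / n) = -u := by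
      rw [Real.log_div (Real.exp_ne_zero _) hn0.ne', Real.log_exp, ← hL]; ring
    simp only [Function.comp_apply, hH, hlg]
    rw [Real.rpow_def_of_pos hn0 r, Real.rpow_def_of_pos hn0 (-θ),
        Real.rpow_def_of_pos (Real.exp_pos _) (1-r), Real.rpow_def_of_pos (Real.exp_pos _) (θ-1),
        Real.log_exp, ← hL]
    calc Real.exp (L*r) * (Real.exp ((L-u)*(1-r)) *
          (θ * Real.exp ((L-u)*(θ-1)) * Real.exp (L*(-θ)) * (-u)^k * (-u + ((k:ℝ)+1)/θ))^2
            * Real.exp (L-u))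
        = Real.exp (L*r + (L-u)*(1-r) + ((L-u)*(θ-1) + (L-u)*(θ-1)) + (L*(-θ) + L*(-θ)) + (L-u))
            * ((-u)^k * (-u)^k * (θ^2 * (-u + ((k:ℝ)+1)/θ)^2)) := by
          rw [exp_add, exp_add, exp_add, exp_add, exp_add, exp_add]; ring
      _ = exp (-((2*θ-r)*u)) * (θ^2 * u^(2*k) * (u - ((k:ℝ)+1)/θ)^2) := by
          rw [show L*r + (L-u)*(1-r) + ((L-u)*(θ-1) + (L-u)*(θ-1)) + (L*(-θ) + L*(-θ)) + (L-u)
              = -((2*θ-r)*u) by ring]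
          congr 1
          rw [← pow_add, ← two_mul, pow_mul, neg_sq, ← pow_mul,
              show (-u + ((k:ℝ)+1)/θ) = -(u - ((k:ℝ)+1)/θ) by ring, neg_sq]
          ring
  rw [← hsub, ← hrefl, ← intervalIntegral.integral_const_mul]
  exact integral_congr (fun u _ => key u)

private lemma aux_int (a θ : ℝ) (ha : 0 < a) (hθ : 0 < θ) (k : ℕ) :
    IntegrableOn (fun u : ℝ => exp (-(a*u)) * (θ^2 * u^(2*k) * (u - ((k:ℝ)+1)/θ)^2)) (Ioi 0) := by
  have hJ : ∀ p : ℝ, -1 < p → IntegrableOn (fun u:ℝ => u ^ p * exp (-(a*u))) (Ioi 0) := by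
    intro p hp
    have := integrableOn_rpow_mul_exp_neg_mul_rpow hp (p := 1) one_pos ha
    simpa [rpow_one, neg_mul] using this
  have h1 := ((hJ (2*k+2) (by nlinarith [Nat.cast_nonneg (α:=ℝ) k])).const_mul (θ^2))
  have h2 := ((hJ (2*k+1) (by nlinarith [Nat.cast_nonneg (α:=ℝ) k])).const_mul (2*θ*((k:ℝ)+1)))
  have h3 := ((hJ (2*k) (by nlinarith [Nat.cast_nonneg (α:=ℝ) k])).const_mul (((k:ℝ)+1)^2))
  refine IntegrableOn.congr_fun ((h1.sub h2).add h3) ?_ measurableSet_Ioi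
  intro u hu
  have hu0 : (0:ℝ) < u := hu
  have e1 : u ^ ((2*k+2 : ℝ)) = u ^ (2*k+2 : ℕ) := by
    rw [show ((2*k+2:ℝ)) = ((2*k+2:ℕ):ℝ) by push_cast; ring, rpow_natCast]
  have e2 : u ^ ((2*k+1 : ℝ)) = u ^ (2*k+1 : ℕ) := by
    rw [show ((2*k+1:ℝ)) = ((2*k+1:ℕ):ℝ) by push_cast; ring, rpow_natCast]
  have e3 : u ^ ((2*k : ℝ)) = u ^ (2*k : ℕ) := by
    rw [show ((2*k:ℝ)) = ((2*k:ℕ):ℝ) by push_cast; ring, rpow_natCast]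
  simp only [Pi.add_apply, Pi.sub_apply, e1, e2, e3]
  field_simp
  ring

private lemma aux_val (θ r : ℝ) (hr0 : 0 < r) (hθ0 : 0 < θ) (ha : 0 < 2*θ - r) (k : ℕ) :
    ∫ u in Ioi 0, exp (-((2*θ-r)*u)) * (θ^2 * u^(2*k) * (u - ((k:ℝ)+1)/θ)^2)
      = r ^ (-2 * (((k+1:ℕ)):ℤ) + 1) * (2 * θ / r - 1) ^ (-2 * (((k+1:ℕ)):ℤ) - 1)
        * ((k+1:ℕ):ℝ) * (((k+1:ℕ):ℝ) + (2 / r) * (θ / r - 1) * θ)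
        * Real.Gamma (2 * ((k+1:ℕ):ℝ) - 1) := by
  set a := 2*θ - r with hadef
  have hJ : ∀ p : ℝ, -1 < p → IntegrableOn (fun u:ℝ => u ^ p * exp (-(a*u))) (Ioi 0) := by
    intro p hp
    have := integrableOn_rpow_mul_exp_neg_mul_rpow hp (p := 1) one_pos ha
    simpa [rpow_one, neg_mul] using this
  have hk : (-1:ℝ) ≤ 2*(k:ℝ) := by nlinarith [Nat.cast_nonneg (α:=ℝ) k]
  have heq : EqOn (fun u : ℝ => exp (-(a*u)) * (θ^2 * u^(2*k) * (u - ((k:ℝ)+1)/θ)^2))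
      (fun u : ℝ => θ^2 * (u ^ ((2*(k:ℝ)+3)-1) * exp (-(a*u)))
        - (2*θ*((k:ℝ)+1)) * (u ^ ((2*(k:ℝ)+2)-1) * exp (-(a*u)))
        + (((k:ℝ)+1)^2) * (u ^ ((2*(k:ℝ)+1)-1) * exp (-(a*u)))) (Ioi 0) := by
    intro u hu
    have hu0 : (0:ℝ) < u := hu
    have e1 : u ^ ((2*(k:ℝ)+3)-1) = u ^ (2*k+2 : ℕ) := by
      rw [show ((2*(k:ℝ)+3)-1) = ((2*k+2:ℕ):ℝ) by push_cast; ring, rpow_natCast]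
    have e2 : u ^ ((2*(k:ℝ)+2)-1) = u ^ (2*k+1 : ℕ) := by
      rw [show ((2*(k:ℝ)+2)-1) = ((2*k+1:ℕ):ℝ) by push_cast; ring, rpow_natCast]
    have e3 : u ^ ((2*(k:ℝ)+1)-1) = u ^ (2*k : ℕ) := by
      rw [show ((2*(k:ℝ)+1)-1) = ((2*k:ℕ):ℝ) by push_cast; ring, rpow_natCast]
    simp only [e1, e2, e3]
    field_simp
    ring
  rw [setIntegral_congr_fun measurableSet_Ioi heq]
  have i1 := (hJ ((2*(k:ℝ)+3)-1) (by linarith)).const_mul (θ^2)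
  have i2 := (hJ ((2*(k:ℝ)+2)-1) (by linarith)).const_mul (2*θ*((k:ℝ)+1))
  have i3 := (hJ ((2*(k:ℝ)+1)-1) (by linarith)).const_mul (((k:ℝ)+1)^2)
  have i12 : Integrable (fun x : ℝ => θ^2 * (x ^ ((2*(k:ℝ)+3)-1) * exp (-(a*x)))
      - (2*θ*((k:ℝ)+1)) * (x ^ ((2*(k:ℝ)+2)-1) * exp (-(a*x)))) (volume.restrict (Ioi 0)) :=
    i1.sub i2
  rw [integral_add i12 i3, integral_sub i1 i2,
      MeasureTheory.integral_const_mul, MeasureTheory.integral_const_mul, MeasureTheory.integral_const_mul,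
      integral_rpow_mul_exp_neg_mul_Ioi (by linarith) ha,
      integral_rpow_mul_exp_neg_mul_Ioi (by linarith) ha,
      integral_rpow_mul_exp_neg_mul_Ioi (by linarith) ha]
  have hG1 : Real.Gamma (2*(k:ℝ)+3) = (2*(k:ℝ)+2) * ((2*(k:ℝ)+1) * Real.Gamma (2*(k:ℝ)+1)) := by
    rw [show (2*(k:ℝ)+3) = (2*(k:ℝ)+2) + 1 by ring, Real.Gamma_add_one (by positivity),
        show (2*(k:ℝ)+2) = (2*(k:ℝ)+1) + 1 by ring, Real.Gamma_add_one (by positivity)]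
  have hG2 : Real.Gamma (2*(k:ℝ)+2) = (2*(k:ℝ)+1) * Real.Gamma (2*(k:ℝ)+1) := by
    rw [show (2*(k:ℝ)+2) = (2*(k:ℝ)+1) + 1 by ring, Real.Gamma_add_one (by positivity)]
  have hG3 : Real.Gamma (2 * ((k+1:ℕ):ℝ) - 1) = Real.Gamma (2*(k:ℝ)+1) := by
    norm_num; ring_nf
  have hp1 : (1/a) ^ (2*(k:ℝ)+3) = ((a ^ (2*k+3:ℕ) : ℝ))⁻¹ := by
    rw [show (2*(k:ℝ)+3) = ((2*k+3:ℕ):ℝ) by push_cast; ring, rpow_natCast, one_div, inv_pow]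
  have hp2 : (1/a) ^ (2*(k:ℝ)+2) = ((a ^ (2*k+2:ℕ) : ℝ))⁻¹ := by
    rw [show (2*(k:ℝ)+2) = ((2*k+2:ℕ):ℝ) by push_cast; ring, rpow_natCast, one_div, inv_pow]
  have hp3 : (1/a) ^ (2*(k:ℝ)+1) = ((a ^ (2*k+1:ℕ) : ℝ))⁻¹ := by
    rw [show (2*(k:ℝ)+1) = ((2*k+1:ℕ):ℝ) by push_cast; ring, rpow_natCast, one_div, inv_pow]
  have hb : 2*θ/r - 1 = a / r := by field_simp [hadef]; exact hadef.symm
  have hz1 : (r:ℝ) ^ (-2 * (((k+1:ℕ)):ℤ) + 1) = ((r ^ (2*k+1:ℕ) : ℝ))⁻¹ := by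
    rw [show (-2 * (((k+1:ℕ)):ℤ) + 1) = -((2*k+1:ℕ):ℤ) by push_cast; ring, zpow_neg, zpow_natCast]
  have hz2 : (a/r) ^ (-2 * (((k+1:ℕ)):ℤ) - 1) = (r ^ (2*k+3:ℕ) : ℝ) / (a ^ (2*k+3:ℕ) : ℝ) := by
    rw [show (-2 * (((k+1:ℕ)):ℤ) - 1) = -((2*k+3:ℕ):ℤ) by push_cast; ring, zpow_neg, zpow_natCast,
        div_pow, inv_div]
  rw [hG1, hG2, hG3, hp1, hp2, hp3, hb, hz1, hz2]
  have hane : a ≠ 0 := ha.ne'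
  have hrne : r ≠ 0 := hr0.ne'
  push_cast
  field_simp
  ring

/-- Limit of the scaled integral of the squared `m`-th θ-derivative of
`f_{t,n}(θ) = θ t^{θ-1} n^{-θ}`:
`n^r ∫_1^n t^{1-r} [d^m f/dθ^m]² dt → r^{-2m+1}(2θ/r-1)^{-2m-1} m (m + (2/r)(θ/r-1)θ) Γ(2m-1)`. -/
theorem stmt_4 (θ r : ℝ) (hr : r = 1 ∨ r = 2) (hθ : 1 < 2 * θ / r)
    (m : ℕ) (hm : 1 ≤ m) :
    Tendsto
      (fun n : ℝ => n ^ r * ∫ t in (1:ℝ)..n, t ^ (1 - r) *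
        (θ * t ^ (θ - 1) * n ^ (-θ) * Real.log (t / n) ^ (m - 1)
          * (Real.log (t / n) + (m : ℝ) / θ)) ^ 2)
      atTop
      (nhds (r ^ (-2 * (m : ℤ) + 1) * (2 * θ / r - 1) ^ (-2 * (m : ℤ) - 1)
        * m * ((m : ℝ) + (2 / r) * (θ / r - 1) * θ) * Real.Gamma (2 * (m : ℝ) - 1))) := by
  obtain ⟨k, rfl⟩ : ∃ k, m = k + 1 := ⟨m - 1, (Nat.succ_pred_eq_of_pos hm).symm⟩
  have hr0 : (0:ℝ) < r := by rcases hr with rfl | rfl <;> norm_num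
  have ha : 0 < 2*θ - r := by
    have := (one_lt_div hr0).mp hθ
    linarith
  have hθ0 : (0:ℝ) < θ := by linarith
  have hint := aux_int (2*θ - r) θ ha hθ0 k
  have T0 := MeasureTheory.intervalIntegral_tendsto_integral_Ioi 0 hint Real.tendsto_log_atTop
  rw [aux_val θ r hr0 hθ0 ha k] at T0
  refine Tendsto.congr' ?_ T0
  filter_upwards [eventually_ge_atTop (1:ℝ)] with n hn
  have := (aux_subst θ r k n hn).symm
  simp only [Nat.add_sub_cancel, Nat.cast_add, Nat.cast_one] at this ⊢
  exact this
end

section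
/- Define D(θ,θ₀) := (θ−θ₀)² · (σ_a/θ₀)² · [(2(1−β₀)θ₀ − 1)θ − ((1−β₀)θ₀ − 1)] / [(2θ − 1)(θ₀(1−β₀) + θ − 1)], with σ_a² := σ_ε²θ₀²/(2(1−β₀)θ₀ − 1) > 0. Under the conditions 1 < θ̲ ≤ θ ≤ θ̄, θ₀ ∈ (θ̲, θ̄), and θ₀(1−β₀) > 1/2 with β₀ < 1, the function θ ↦ D(θ,θ₀) is continuous on [θ̲, θ̄], nonnegative, and θ₀ is its unique minimizer (with minimum value 0). -/
open Set

/-- The identifying criterion `D(θ,θ₀)` is continuous on `[θ̲,θ̄]`, nonnegative,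
vanishes at `θ₀`, and `θ₀` is its unique minimizer. -/
theorem stmt_8 (σε β₀ θlo θhi θ₀ : ℝ) (hσε : 0 < σε) (hβ₀ : β₀ < 1)
    (hlo : 1 < θlo) (hlohi : θlo < θhi) (hθ₀ : θ₀ ∈ Ioo θlo θhi)
    (hgain : 1 / 2 < θ₀ * (1 - β₀))
    (D : ℝ → ℝ)
    (hD : D = fun θ => (θ - θ₀) ^ 2 * ((σε ^ 2 * θ₀ ^ 2 / (2 * (1 - β₀) * θ₀ - 1)) / θ₀ ^ 2)
      * ((2 * (1 - β₀) * θ₀ - 1) * θ - ((1 - β₀) * θ₀ - 1))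
      / ((2 * θ - 1) * (θ₀ * (1 - β₀) + θ - 1))) :
    ContinuousOn D (Icc θlo θhi)
    ∧ (∀ θ ∈ Icc θlo θhi, 0 ≤ D θ)
    ∧ D θ₀ = 0
    ∧ (∀ θ ∈ Icc θlo θhi, D θ = 0 → θ = θ₀) := by
  obtain ⟨h₀lo, h₀hi⟩ := hθ₀
  have hθ₀pos : 0 < θ₀ := by linarith
  have hc : 1 / 2 < (1 - β₀) * θ₀ := by linarith [hgain]
  have hσa : 0 < (σε ^ 2 * θ₀ ^ 2 / (2 * (1 - β₀) * θ₀ - 1)) / θ₀ ^ 2 := by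
    apply div_pos (div_pos (by positivity) (by linarith)) (by positivity)
  have hden : ∀ θ ∈ Icc θlo θhi, 0 < (2 * θ - 1) * (θ₀ * (1 - β₀) + θ - 1) := by
    intro θ ⟨h1, h2⟩
    have : 1 < θ := lt_of_lt_of_le hlo h1
    have : 0 < 2 * θ - 1 := by linarith
    have : 0 < θ₀ * (1 - β₀) + θ - 1 := by linarith
    positivity
  have hnum : ∀ θ ∈ Icc θlo θhi,
      0 < (2 * (1 - β₀) * θ₀ - 1) * θ - ((1 - β₀) * θ₀ - 1) := by
    intro θ ⟨h1, h2⟩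
    have hθ1 : 1 < θ := lt_of_lt_of_le hlo h1
    nlinarith [mul_pos (show (0:ℝ) < 2 * (1 - β₀) * θ₀ - 1 by linarith) (show (0:ℝ) < θ - 1 by linarith)]
  subst hD
  refine ⟨?_, ?_, by simp, ?_⟩
  · exact ContinuousOn.div (by fun_prop) (by fun_prop)
      (fun θ hθ => ne_of_gt (hden θ hθ))
  · intro θ hθ
    exact div_nonneg (mul_nonneg (mul_nonneg (sq_nonneg _) hσa.le) (hnum θ hθ).le)
      (hden θ hθ).le
  · intro θ hθ h
    rcases div_eq_zero_iff.mp h with h | h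
    · rcases mul_eq_zero.mp h with h | h
      · rcases mul_eq_zero.mp h with h | h
        · have := pow_eq_zero_iff (n := 2) (by norm_num) |>.mp h
          linarith [sub_eq_zero.mp this]
        · exact absurd h hσa.ne'
      · exact absurd h (hnum θ hθ).ne'
    · exact absurd h (hden θ hθ).ne'
end

section
/- Under Assumption A (1 < θ₀, θ₀(1−β₀) > 1/2, β₀ < 1), the quantity σ_ȧ² := (σ_a/θ₀)² · [θ₀(2−β₀) − 2θ₀²(1−β₀) − 1] / [(2θ₀ − 1)(1 − θ₀(2−β₀))] is strictly positive, where σ_a² := σ_ε²θ₀²/(2(1−β₀)θ₀ − 1) and σ_ε > 0. -/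
/-- Strict positivity of `σ_ȧ²` under Assumption A. -/
theorem stmt_9 (σε β₀ θ₀ : ℝ) (hσε : 0 < σε) (hθ₀ : 1 < θ₀) (hβ₀ : β₀ < 1)
    (hgain : 1 / 2 < θ₀ * (1 - β₀)) :
    0 < ((σε ^ 2 * θ₀ ^ 2 / (2 * (1 - β₀) * θ₀ - 1)) / θ₀ ^ 2)
      * ((θ₀ * (2 - β₀) - 2 * θ₀ ^ 2 * (1 - β₀) - 1)
        / ((2 * θ₀ - 1) * (1 - θ₀ * (2 - β₀)))) := by
  have h1 : 0 < 2 * (1 - β₀) * θ₀ - 1 := by nlinarith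
  have h2 : 0 < σε ^ 2 * θ₀ ^ 2 / (2 * (1 - β₀) * θ₀ - 1) / θ₀ ^ 2 := by
    apply div_pos (div_pos (by positivity) h1) (by positivity)
  have hnum : θ₀ * (2 - β₀) - 2 * θ₀ ^ 2 * (1 - β₀) - 1 < 0 := by nlinarith
  have hden : (2 * θ₀ - 1) * (1 - θ₀ * (2 - β₀)) < 0 := by nlinarith
  exact mul_pos h2 (div_pos_of_neg_of_neg hnum hden)
end

section
/- The 2×2 matrix K := [[σ_a², β₀σ_{aȧ}], [β₀σ_{aȧ}, β₀²σ_ȧ²]] with σ_{aȧ} := (σ_a/θ₀)² · θ₀(1 − (1−β₀)θ₀)/(1 − θ₀(2−β₀)), σ_ȧ² := (σ_a/θ₀)² · [θ₀(2−β₀) − 2θ₀²(1−β₀) − 1]/[(2θ₀−1)(1 − θ₀(2−β₀))], and σ_a² := σ_ε²θ₀²/(2(1−β₀)θ₀−1), is positive definite if and only if β₀ ≠ 0, under Assumption A (θ₀ > 1, β₀ < 1, θ₀(1−β₀) > 1/2, σ_ε > 0). -/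
/-- The limiting second-moment matrix `K` of the joint NLS gradient is positive
definite iff `β₀ ≠ 0`. -/
theorem stmt_11 (σε β₀ θ₀ : ℝ) (hσε : 0 < σε) (hθ₀ : 1 < θ₀) (hβ₀ : β₀ < 1)
    (hgain : 1 / 2 < θ₀ * (1 - β₀))
    (sa2 sad sd2 : ℝ)
    (hsa2 : sa2 = σε ^ 2 * θ₀ ^ 2 / (2 * (1 - β₀) * θ₀ - 1))
    (hsad : sad = (sa2 / θ₀ ^ 2) * (θ₀ * (1 - (1 - β₀) * θ₀) / (1 - θ₀ * (2 - β₀))))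
    (hsd2 : sd2 = (sa2 / θ₀ ^ 2) * ((θ₀ * (2 - β₀) - 2 * θ₀ ^ 2 * (1 - β₀) - 1)
      / ((2 * θ₀ - 1) * (1 - θ₀ * (2 - β₀))))) :
    (Matrix.PosDef !![sa2, β₀ * sad; β₀ * sad, β₀ ^ 2 * sd2]) ↔ β₀ ≠ 0 := by
  have hD1 : 0 < 2 * (1 - β₀) * θ₀ - 1 := by nlinarith
  have hθpos : (0:ℝ) < θ₀ := by linarith
  have hθ2 : (0:ℝ) < θ₀ ^ 2 := by positivity
  have hB : 1 - θ₀ * (2 - β₀) < 0 := by nlinarith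
  have hBne : 1 - θ₀ * (2 - β₀) ≠ 0 := ne_of_lt hB
  have h2t : (0:ℝ) < 2 * θ₀ - 1 := by linarith
  have hsa2pos : 0 < sa2 := by
    rw [hsa2]; positivity
  have hdet : sa2 * sd2 - sad ^ 2
      = sa2 ^ 2 * (2 * (1 - β₀) * θ₀ - 1) / ((2 * θ₀ - 1) * (1 - θ₀ * (2 - β₀)) ^ 2) := by
    rw [hsad, hsd2]
    generalize hc : 2 * θ₀ - 1 = c at h2t ⊢
    field_simp [h2t.ne']
    subst hc
    ring
  have hdetpos : 0 < sa2 * sd2 - sad ^ 2 := by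
    rw [hdet]
    apply div_pos
    · positivity
    · positivity
  constructor
  · intro hPD hb0
    have := hPD.det_pos
    rw [Matrix.det_fin_two_of, hb0] at this
    simp at this
  · intro hb0
    have hb2 : 0 < β₀ ^ 2 := by positivity
    rw [Matrix.posDef_iff_dotProduct_mulVec]
    constructor
    · unfold Matrix.IsHermitian
      ext i j
      fin_cases i <;> fin_cases j <;> simp
    · intro x hx
      have hx01 : x 0 ≠ 0 ∨ x 1 ≠ 0 := by
        by_contra h
        push_neg at h
        apply hx
        ext i; fin_cases i <;> simp [h.1, h.2]
      simp [Matrix.mulVec, dotProduct, Fin.sum_univ_two]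
      have key : 0 < β₀ ^ 2 * (sa2 * sd2 - sad ^ 2) := mul_pos hb2 hdetpos
      have hsd2pos : 0 < sd2 := by
        have h1 : sad ^ 2 < sa2 * sd2 := by linarith
        nlinarith [sq_nonneg sad]
      rcases hx01 with h | h
      · have hx0 : 0 < x 0 ^ 2 := by positivity
        nlinarith [sq_nonneg (β₀ * sad * x 0 + β₀ ^ 2 * sd2 * x 1), mul_pos key hx0,
          mul_pos hb2 hsd2pos]
      · have hx1 : 0 < x 1 ^ 2 := by positivity
        nlinarith [sq_nonneg (sa2 * x 0 + β₀ * sad * x 1), mul_pos key hx1]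
end

section
/- Define D₁(κ,κ₀) for κ = (β,θ), κ₀ = (β₀,θ₀) by D₁(κ,κ₀) := (2c₀θ₀ − 1)^{-1}·[β²θ₀² + (β₀²θ²/(2θ−1))·(2c₀θ₀ − 1 + 2θ₀β₀((1+c₀)θ₀ − 1)/(c₀θ₀ + θ − 1)) − 2ββ₀θθ₀(θ₀(1+c₀) − 1)/(c₀θ₀ + θ − 1)] with c₀ := 1 − β₀. Under Assumption A (θ, θ₀ ∈ (1, ∞), c₀θ₀ > 1/2, β₀ < 1, β < 1), D₁ is continuous and nonnegative in κ, D₁(κ₀,κ₀) = 0, and if β₀ = 0 then D₁((β,θ),(0,θ₀)) = β²θ₀²/(2c₀θ₀−1) = 0 for β = 0 regardless of the value of θ (identification failure at β₀ = 0). -/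
open Set

/-- Properties of the limit criterion `D₁(κ,κ₀)` for joint estimation: continuity
on `{β < 1, θ > 1}`, nonnegativity there, `D₁(κ₀,κ₀) = 0`, and identification
failure at `β₀ = 0`: in that case `D₁((β,θ)) = β²θ₀²/(2c₀θ₀-1)`, which is `0`
for `β = 0` regardless of `θ`. -/
theorem stmt_13 (β₀ θ₀ c₀ : ℝ) (hc₀ : c₀ = 1 - β₀) (hθ₀ : 1 < θ₀) (hβ₀ : β₀ < 1)
    (hgain : 1 / 2 < c₀ * θ₀)
    (D₁ : ℝ × ℝ → ℝ)
    (hD₁ : ∀ β θ : ℝ, D₁ (β, θ) = (2 * c₀ * θ₀ - 1)⁻¹ *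
      (β ^ 2 * θ₀ ^ 2
        + (β₀ ^ 2 * θ ^ 2 / (2 * θ - 1)) *
            (2 * c₀ * θ₀ - 1 + 2 * θ₀ * β₀ * ((1 + c₀) * θ₀ - 1) / (c₀ * θ₀ + θ - 1))
        - 2 * β * β₀ * θ * θ₀ * (θ₀ * (1 + c₀) - 1) / (c₀ * θ₀ + θ - 1))) :
    ContinuousOn D₁ {p : ℝ × ℝ | p.1 < 1 ∧ 1 < p.2}
    ∧ (∀ β θ : ℝ, β < 1 → 1 < θ → 0 ≤ D₁ (β, θ))
    ∧ D₁ (β₀, θ₀) = 0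
    ∧ (β₀ = 0 → ∀ β θ : ℝ, D₁ (β, θ) = β ^ 2 * θ₀ ^ 2 / (2 * c₀ * θ₀ - 1)
        ∧ D₁ (0, θ) = 0) := by
  have hA : (0:ℝ) < 2 * c₀ * θ₀ - 1 := by linarith
  refine ⟨?_, ?_, ?_, ?_⟩
  · -- continuity
    have hfun : D₁ = fun p : ℝ × ℝ => (2 * c₀ * θ₀ - 1)⁻¹ *
      (p.1 ^ 2 * θ₀ ^ 2
        + (β₀ ^ 2 * p.2 ^ 2 / (2 * p.2 - 1)) *
            (2 * c₀ * θ₀ - 1 + 2 * θ₀ * β₀ * ((1 + c₀) * θ₀ - 1) / (c₀ * θ₀ + p.2 - 1))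
        - 2 * p.1 * β₀ * p.2 * θ₀ * (θ₀ * (1 + c₀) - 1) / (c₀ * θ₀ + p.2 - 1)) := by
      funext p
      obtain ⟨β, θ⟩ := p
      exact hD₁ β θ
    rw [hfun]
    have hden1 : ∀ p : ℝ × ℝ, p ∈ {p : ℝ × ℝ | p.1 < 1 ∧ 1 < p.2} → (2 * p.2 - 1) ≠ 0 := by
      intro p hp; have h := hp.2; exact ne_of_gt (by linarith)
    have hden2 : ∀ p : ℝ × ℝ, p ∈ {p : ℝ × ℝ | p.1 < 1 ∧ 1 < p.2} →
        (c₀ * θ₀ + p.2 - 1) ≠ 0 := by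
      intro p hp; have h := hp.2; exact ne_of_gt (by linarith)
    apply ContinuousOn.mul continuousOn_const
    apply ContinuousOn.sub
    · apply ContinuousOn.add
      · exact (Continuous.continuousOn (by fun_prop))
      · apply ContinuousOn.mul
        · exact ContinuousOn.div (Continuous.continuousOn (by fun_prop))
            (Continuous.continuousOn (by fun_prop)) hden1
        · apply ContinuousOn.add continuousOn_const
          exact ContinuousOn.div (Continuous.continuousOn (by fun_prop))
            (Continuous.continuousOn (by fun_prop)) hden2
    · exact ContinuousOn.div (Continuous.continuousOn (by fun_prop))
        (Continuous.continuousOn (by fun_prop)) hden2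
  · -- nonnegativity
    intro β θ hβ hθ
    rw [hD₁]
    have h2t : (0:ℝ) < 2 * θ - 1 := by linarith
    have hs : (0:ℝ) < c₀ * θ₀ + θ - 1 := by linarith
    have key : (β ^ 2 * θ₀ ^ 2
        + (β₀ ^ 2 * θ ^ 2 / (2 * θ - 1)) *
            (2 * c₀ * θ₀ - 1 + 2 * θ₀ * β₀ * ((1 + c₀) * θ₀ - 1) / (c₀ * θ₀ + θ - 1))
        - 2 * β * β₀ * θ * θ₀ * (θ₀ * (1 + c₀) - 1) / (c₀ * θ₀ + θ - 1))
        = ((2 * θ - 1) * (β * θ₀ * (c₀ * θ₀ + θ - 1)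
              - β₀ * θ * ((1 + c₀) * θ₀ - 1)) ^ 2
            + (2 * c₀ * θ₀ - 1) * β₀ ^ 2 * θ ^ 2 * (θ - θ₀) ^ 2)
          / ((2 * θ - 1) * (c₀ * θ₀ + θ - 1) ^ 2) := by
      have h1 : θ₀ * c₀ + θ - 1 ≠ 0 := by linarith
      have h2 : θ * 2 - 1 ≠ 0 := by linarith
      subst hc₀
      field_simp
      ring
    rw [key]
    have hnum : (0:ℝ) ≤ (2 * θ - 1) * (β * θ₀ * (c₀ * θ₀ + θ - 1)
              - β₀ * θ * ((1 + c₀) * θ₀ - 1)) ^ 2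
            + (2 * c₀ * θ₀ - 1) * β₀ ^ 2 * θ ^ 2 * (θ - θ₀) ^ 2 := by positivity
    have hden : (0:ℝ) ≤ (2 * θ - 1) * (c₀ * θ₀ + θ - 1) ^ 2 := by positivity
    positivity
  · -- D₁(κ₀,κ₀) = 0
    rw [hD₁]
    have h2t : (2 * θ₀ - 1) ≠ 0 := ne_of_gt (by linarith)
    have hs : (c₀ * θ₀ + θ₀ - 1) ≠ 0 := ne_of_gt (by linarith)
    subst hc₀
    have h1 : θ₀ * (1 - β₀ + 1) - 1 ≠ 0 := fun h => hs (by linarith)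
    have h2 : θ₀ * 2 - 1 ≠ 0 := fun h => h2t (by linarith)
    rw [mul_eq_zero]
    right
    field_simp
    ring
  · -- identification failure
    intro h0 β θ
    subst h0
    constructor
    · rw [hD₁]; simp; ring
    · rw [hD₁]; simp
end
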